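/- Let E be a Banach lattice whose dual E' has order continuous norm. Then every weak L-weakly compact subset of E is L-weakly compact. -/

import Mathlib

open Filter Topology Bornology

/-- A sequence in a normed lattice is unbounded-norm (un-) null if `‖ |xₙ| ⊓ u ‖ → 0`
for every positive `u`. -/
def UnNullSeq {G : Type*} [NormedAddCommGroup G] [Lattice G] [IsOrderedAddMonoid G] [HasSolidNorm G] (x : ℕ → G) : Prop :=
  ∀ u : G, 0 ≤ u → Tendsto (fun n => ‖|x n| ⊓ u‖) atTop (𝓝 0)

/-- A pairwise disjoint sequence. -/
def DisjointSeq {G : Type*} [NormedAddCommGroup G] [Lattice G] [IsOrderedAddMonoid G] [HasSolidNorm G] (x : ℕ → G) : Prop :=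
  Pairwise fun n m => |x n| ⊓ |x m| = 0

/-- A norm bounded sequence. -/
def NormBddSeq {G : Type*} [NormedAddCommGroup G] [Lattice G] [IsOrderedAddMonoid G] [HasSolidNorm G] (x : ℕ → G) : Prop :=
  ∃ C : ℝ, ∀ n, ‖x n‖ ≤ C

/-- The solid hull of a set. -/
def SolidHull {G : Type*} [NormedAddCommGroup G] [Lattice G] [IsOrderedAddMonoid G] [HasSolidNorm G] (A : Set G) : Set G :=
  {x | ∃ y ∈ A, |x| ≤ |y|}

/-- A bounded set is L-weakly compact if every disjoint sequence in its solid hull is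
norm null. -/
def LWCSet {G : Type*} [NormedAddCommGroup G] [Lattice G] [IsOrderedAddMonoid G] [HasSolidNorm G] (A : Set G) : Prop :=
  IsBounded A ∧ ∀ x : ℕ → G, (∀ n, x n ∈ SolidHull A) → DisjointSeq x →
    Tendsto (fun n => ‖x n‖) atTop (𝓝 0)

/-- The norm is order continuous: every net decreasing to `0` is norm null. -/
def OrderContNorm (G : Type*) [NormedAddCommGroup G] [Lattice G] [IsOrderedAddMonoid G] [HasSolidNorm G] : Prop :=
  ∀ (ι : Type) [SemilatticeSup ι] [Nonempty ι] (x : ι → G),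
    Antitone x → IsGLB (Set.range x) 0 → Tendsto (fun i => ‖x i‖) atTop (𝓝 0)

/-- Dedekind σ-completeness: every bounded-above increasing sequence has a supremum. -/
def DedekindSigmaComplete (G : Type*) [NormedAddCommGroup G] [Lattice G] [IsOrderedAddMonoid G] [HasSolidNorm G] : Prop :=
  ∀ x : ℕ → G, Monotone x → (∃ b, ∀ n, x n ≤ b) → ∃ s, IsLUB (Set.range x) s

/-- An atom of a Banach lattice. -/
def IsLatticeAtom {G : Type*} [NormedAddCommGroup G] [Lattice G] [IsOrderedAddMonoid G] [HasSolidNorm G] [NormedSpace ℝ G] (a : G) : Prop :=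
  0 < a ∧ ∀ x : G, 0 ≤ x → x ≤ a → ∃ c : ℝ, x = c • a

/-- An atomic Banach lattice: every nonzero positive element dominates an atom. -/
def AtomicLattice (G : Type*) [NormedAddCommGroup G] [Lattice G] [IsOrderedAddMonoid G] [HasSolidNorm G] [NormedSpace ℝ G] : Prop :=
  ∀ x : G, 0 < x → ∃ a, IsLatticeAtom a ∧ a ≤ x

/-- A realization of the Banach lattice `E'` as the topological dual of the Banach lattice
`E`: a linear isometric isomorphism onto `NormedSpace.Dual ℝ E` that identifies the order. -/
structure DualPairing (E E' : Type*) [NormedAddCommGroup E] [Lattice E] [IsOrderedAddMonoid E] [HasSolidNorm E] [NormedSpace ℝ E]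
    [NormedAddCommGroup E'] [Lattice E'] [IsOrderedAddMonoid E'] [HasSolidNorm E'] [NormedSpace ℝ E'] where
  toDual : E' ≃ₗᵢ[ℝ] StrongDual ℝ E
  pos_iff : ∀ f : E', 0 ≤ f ↔ ∀ x : E, 0 ≤ x → 0 ≤ toDual f x

section Pairing

variable {E E' : Type*} [NormedAddCommGroup E] [Lattice E] [IsOrderedAddMonoid E] [HasSolidNorm E] [NormedSpace ℝ E]
  [NormedAddCommGroup E'] [Lattice E'] [IsOrderedAddMonoid E'] [HasSolidNorm E'] [NormedSpace ℝ E']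

/-- A bounded set `A ⊆ E` is weak L-weakly compact if `sup_{x ∈ A} |x'ₙ(x)| → 0` for every
norm bounded un-null sequence `(x'ₙ)` in the dual `E'`. -/
def WeakLWCSet (P : DualPairing E E') (A : Set E) : Prop :=
  IsBounded A ∧ ∀ f : ℕ → E', NormBddSeq f → UnNullSeq f →
    Tendsto (fun n => ⨆ x ∈ A, |P.toDual (f n) x|) atTop (𝓝 0)

/-- A bounded set `B ⊆ E'` is weak* L-weakly compact if `sup_{x' ∈ B} |x'(xₙ)| → 0` for every
norm bounded un-null sequence `(xₙ)` in `E`. -/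
def WeakStarLWCSet (P : DualPairing E E') (B : Set E') : Prop :=
  IsBounded B ∧ ∀ x : ℕ → E, NormBddSeq x → UnNullSeq x →
    Tendsto (fun n => ⨆ f ∈ B, |P.toDual f (x n)|) atTop (𝓝 0)

end Pairing

section Op

variable {E F X : Type*} [NormedAddCommGroup E] [Lattice E] [IsOrderedAddMonoid E] [HasSolidNorm E] [NormedSpace ℝ E]
  [NormedAddCommGroup X] [NormedSpace ℝ X]

/-- `T : E → X` is M-weakly compact if `‖Txₙ‖ → 0` for every norm bounded disjoint
sequence in `E`. -/
def MWeaklyCompact (T : E →L[ℝ] X) : Prop :=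
  ∀ x : ℕ → E, NormBddSeq x → DisjointSeq x → Tendsto (fun n => ‖T (x n)‖) atTop (𝓝 0)

/-- `T : E → X` is weak M-weakly compact if `‖Txₙ‖ → 0` for every un-null sequence in the
closed unit ball of `E`. -/
def WeakMWeaklyCompact (T : E →L[ℝ] X) : Prop :=
  ∀ x : ℕ → E, (∀ n, ‖x n‖ ≤ 1) → UnNullSeq x → Tendsto (fun n => ‖T (x n)‖) atTop (𝓝 0)

/-- `T : X → E` is L-weakly compact if the image of the closed unit ball is an
L-weakly compact set. -/
def LWCOperator (T : X →L[ℝ] E) : Prop :=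
  LWCSet (T '' Metric.closedBall 0 1)

/-- `T : X → E` is weak L-weakly compact if `sup_{x ∈ B_X} |fₙ(Tx)| → 0` for every norm
bounded un-null sequence `(fₙ)` in `E'`. -/
def WeakLWCOperator {E' : Type*} [NormedAddCommGroup E'] [Lattice E'] [IsOrderedAddMonoid E'] [HasSolidNorm E'] [NormedSpace ℝ E']
    (P : DualPairing E E') (T : X →L[ℝ] E) : Prop :=
  ∀ f : ℕ → E', NormBddSeq f → UnNullSeq f →
    Tendsto (fun n => ⨆ x ∈ Metric.closedBall (0 : X) 1, |P.toDual (f n) (T x)|) atTop (𝓝 0)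

/-- `T : X → E'` is weak* L-weakly compact if its image of the unit ball is a weak*
L-weakly compact set. -/
def WeakStarLWCOperator {E' : Type*} [NormedAddCommGroup E'] [Lattice E'] [IsOrderedAddMonoid E'] [HasSolidNorm E'] [NormedSpace ℝ E']
    (P : DualPairing E E') (T : X →L[ℝ] E') : Prop :=
  ∀ x : ℕ → E, NormBddSeq x → UnNullSeq x →
    Tendsto (fun n => ⨆ y ∈ Metric.closedBall (0 : X) 1, |P.toDual (T y) (x n)|) atTop (𝓝 0)

/-- A positive operator. -/
def PositiveOp {F : Type*} [NormedAddCommGroup F] [Lattice F] [IsOrderedAddMonoid F] [HasSolidNorm F] [NormedSpace ℝ F] (T : E →L[ℝ] F) : Prop :=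
  ∀ x : E, 0 ≤ x → 0 ≤ T x

end Op

/-- Membership in `G^a`, the maximal ideal on which the induced norm is order continuous:
`x ∈ G^a` iff every disjoint sequence in `[0, |x|]` is norm null. -/
def InOrderContPart {G : Type*} [NormedAddCommGroup G] [Lattice G] [IsOrderedAddMonoid G] [HasSolidNorm G] (x : G) : Prop :=
  ∀ y : ℕ → G, (∀ n, 0 ≤ y n ∧ y n ≤ |x|) → DisjointSeq y →
    Tendsto (fun n => ‖y n‖) atTop (𝓝 0)


-- Auxiliary lemmas for `stmt7`

section AuxLattice

variable {G : Type*} [NormedAddCommGroup G] [Lattice G] [IsOrderedAddMonoid G] [HasSolidNorm G]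

lemma aux_inf_add_le {a b c : G} (hb : 0 ≤ b) (hac : 0 ≤ a ⊓ c) :
    (a + b) ⊓ c ≤ a ⊓ c + b ⊓ c := by
  have h1 : (a + b) ⊓ c ≤ a ⊓ c + b := by
    have h2 : (a + b) ⊓ c ≤ (a + b) ⊓ (c + b) :=
      inf_le_inf_left _ (le_add_of_nonneg_right hb)
    have h3 : (a + b) ⊓ (c + b) = a ⊓ c + b := (inf_add a c b).symm
    rw [← h3]; exact h2
  have h2' : (a + b) ⊓ c ≤ a ⊓ c + c :=
    le_trans inf_le_right (le_add_of_nonneg_left hac)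
  have h4 : (a ⊓ c + b) ⊓ (a ⊓ c + c) = a ⊓ c + b ⊓ c := (add_inf b c (a ⊓ c)).symm
  calc (a + b) ⊓ c ≤ (a ⊓ c + b) ⊓ (a ⊓ c + c) := le_inf h1 h2'
    _ = a ⊓ c + b ⊓ c := h4

lemma aux_inf_nsmul {a b : G} (ha : 0 ≤ a) (hb : 0 ≤ b) (hab : a ⊓ b = 0) (k : ℕ) :
    a ⊓ k • b = 0 := by
  induction k with
  | zero => rw [zero_smul]; exact inf_eq_right.2 ha
  | succ k ih =>
    refine le_antisymm ?_ (le_inf ha (nsmul_nonneg hb _))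
    have h1 : a ⊓ (k + 1) • b = ((k • b) + b) ⊓ a := by
      rw [inf_comm, succ_nsmul]
    rw [h1]
    calc ((k • b) + b) ⊓ a ≤ (k • b) ⊓ a + b ⊓ a :=
          aux_inf_add_le hb (le_inf (nsmul_nonneg hb _) ha)
      _ = 0 := by rw [inf_comm _ a, inf_comm _ a, ih, hab, add_zero]

lemma aux_abs_sub_le {a b : G} (ha : 0 ≤ a) (hb : 0 ≤ b) : |a - b| ≤ a + b := by
  have h1 : a - b ≤ a + b := by
    have := add_le_add (le_refl a) (neg_le_self hb)
    rw [← sub_eq_add_neg] at this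
    exact this
  have h2 : -(a - b) ≤ a + b := by
    rw [neg_sub]
    have h3 : b + -a ≤ b + a := add_le_add (le_refl b) (neg_le_self ha)
    rw [← sub_eq_add_neg] at h3
    calc b - a ≤ b + a := h3
      _ = a + b := add_comm _ _
  exact abs_le'.2 ⟨h1, h2⟩

lemma aux_add_le {a b u : G} (hab : a ⊓ b = 0) (hau : a ≤ u) (hbu : b ≤ u) : a + b ≤ u := by
  have h := inf_add_sup a b
  rw [← h, hab, zero_add]
  exact sup_le hau hbu

lemma aux_sum_inf (h : ℕ → G) (c : G) (hpos : ∀ i, 0 ≤ h i) (hc : 0 ≤ c) :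
    ∀ k : ℕ, (∀ i, i < k → h i ⊓ c = 0) → (∑ i ∈ Finset.range k, h i) ⊓ c = 0 := by
  intro k
  induction k with
  | zero => intro _; simp [inf_eq_left.2 hc]
  | succ k ih =>
    intro hd
    have hS : 0 ≤ ∑ i ∈ Finset.range k, h i := Finset.sum_nonneg fun i _ => hpos i
    refine le_antisymm ?_ (le_inf (Finset.sum_nonneg fun i _ => hpos i) hc)
    rw [Finset.sum_range_succ]
    calc (∑ i ∈ Finset.range k, h i + h k) ⊓ c
        ≤ (∑ i ∈ Finset.range k, h i) ⊓ c + h k ⊓ c :=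
          aux_inf_add_le (hpos k) (le_inf hS hc)
      _ = 0 := by
          rw [ih (fun i hi => hd i (hi.trans (Nat.lt_succ_self k))),
            hd k (Nat.lt_succ_self k), add_zero]

lemma aux_sum_le (h : ℕ → G) (u : G) (hpos : ∀ i, 0 ≤ h i)
    (hd : Pairwise fun i j => h i ⊓ h j = 0) (hu : ∀ i, h i ≤ u) :
    ∀ k, ∑ i ∈ Finset.range k, h i ≤ u := by
  intro k
  induction k with
  | zero => simpa using le_trans (hpos 0) (hu 0)
  | succ k ih =>
    rw [Finset.sum_range_succ]
    refine aux_add_le ?_ ih (hu k)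
    exact aux_sum_inf h (h k) hpos (hpos k) k fun i hi => hd (Nat.ne_of_lt hi)

end AuxLattice

section AuxCLM

variable {E : Type*} [NormedAddCommGroup E] [Lattice E] [IsOrderedAddMonoid E] [HasSolidNorm E] [NormedSpace ℝ E]

/-- Extend an additive functional on the positive cone to a continuous linear functional. -/
lemma aux_exists_posCLM (p : E → ℝ) (C : ℝ)
    (hadd : ∀ y z, 0 ≤ y → 0 ≤ z → p (y + z) = p y + p z)
    (hC : ∀ z, 0 ≤ z → |p z| ≤ C * ‖z‖) :
    ∃ T : E →L[ℝ] ℝ, ∀ z, 0 ≤ z → T z = p z := by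
  have hp0 : p 0 = 0 := by
    have h := hadd 0 0 le_rfl le_rfl
    rw [add_zero] at h; linarith
  have key : ∀ x y : E, (fun x => p x⁺ - p x⁻) (x + y)
      = (fun x => p x⁺ - p x⁻) x + (fun x => p x⁺ - p x⁻) y := by
    intro x y
    have hid : (x + y)⁺ + (x⁻ + y⁻) = (x + y)⁻ + (x⁺ + y⁺) := by
      apply eq_of_sub_eq_zero
      have h5 : (x + y)⁺ + (x⁻ + y⁻) - ((x + y)⁻ + (x⁺ + y⁺))
          = ((x + y)⁺ - (x + y)⁻) - ((x⁺ - x⁻) + (y⁺ - y⁻)) := by abel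
      rw [h5, posPart_sub_negPart, posPart_sub_negPart, posPart_sub_negPart]
      abel
    have pad : ∀ a b c : E, 0 ≤ a → 0 ≤ b → 0 ≤ c →
        p (a + (b + c)) = p a + (p b + p c) := fun a b c ha hb hc => by
      rw [hadd a (b + c) ha (add_nonneg hb hc), hadd b c hb hc]
    have e1 := pad ((x + y)⁺) (x⁻) (y⁻) (posPart_nonneg _) (negPart_nonneg _) (negPart_nonneg _)
    have e2 := pad ((x + y)⁻) (x⁺) (y⁺) (negPart_nonneg _) (posPart_nonneg _) (posPart_nonneg _)
    rw [hid, e2] at e1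
    simp only
    linarith
  have posPart_le_abs' : ∀ x : E, x⁺ ≤ |x| := fun x => by
    rw [posPart_def]; exact sup_le (le_abs_self x) (abs_nonneg x)
  have negPart_le_abs' : ∀ x : E, x⁻ ≤ |x| := fun x => by
    rw [negPart_def]; exact sup_le (neg_le_abs x) (abs_nonneg x)
  set C' := max C 0 with hC'
  have hC'' : ∀ z, 0 ≤ z → |p z| ≤ C' * ‖z‖ := fun z hz =>
    (hC z hz).trans (mul_le_mul_of_nonneg_right (le_max_left _ _) (norm_nonneg _))
  have hq_bound : ∀ x : E, ‖(fun x => p x⁺ - p x⁻) x‖ ≤ (2 * C') * ‖x‖ := by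
    intro x
    have hC'nn : 0 ≤ C' := le_max_right _ _
    have b1 : |p x⁺| ≤ C' * ‖x‖ := by
      refine (hC'' _ (posPart_nonneg _)).trans (mul_le_mul_of_nonneg_left ?_ hC'nn)
      refine norm_le_norm_of_abs_le_abs ?_
      rw [abs_of_nonneg (posPart_nonneg x)]
      exact posPart_le_abs' x
    have b2 : |p x⁻| ≤ C' * ‖x‖ := by
      refine (hC'' _ (negPart_nonneg _)).trans (mul_le_mul_of_nonneg_left ?_ hC'nn)
      refine norm_le_norm_of_abs_le_abs ?_
      rw [abs_of_nonneg (negPart_nonneg x)]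
      exact negPart_le_abs' x
    have : |p x⁺ - p x⁻| ≤ |p x⁺| + |p x⁻| := abs_sub _ _
    simp only [Real.norm_eq_abs]
    linarith
  set Q : E →+ ℝ := AddMonoidHom.mk' (fun x => p x⁺ - p x⁻) key with hQ
  have hcont : Continuous Q :=
    (AddMonoidHomClass.lipschitz_of_bound Q (2 * C') hq_bound).continuous
  refine ⟨Q.toRealLinearMap hcont, fun z hz => ?_⟩
  have : (Q.toRealLinearMap hcont) z = Q z := by rw [AddMonoidHom.coe_toRealLinearMap]
  rw [this]
  show p z⁺ - p z⁻ = p z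
  rw [posPart_eq_self.2 hz, negPart_eq_zero.2 hz, hp0, sub_zero]

/-- The component of a positive functional with respect to the band generated by `e`. -/
lemma aux_exists_component (T : E →L[ℝ] ℝ) (hT : ∀ z, 0 ≤ z → 0 ≤ T z) (e : E) (he : 0 ≤ e) :
    ∃ S : E →L[ℝ] ℝ,
      (∀ z, 0 ≤ z → 0 ≤ S z) ∧ (∀ z, 0 ≤ z → S z ≤ T z) ∧
      (∀ w, 0 ≤ w → w ⊓ e = 0 → S w = 0) ∧
      (∀ w, 0 ≤ w → w ≤ e → S w = T w) ∧
      (∀ z, 0 ≤ z → Filter.Tendsto (fun K : ℕ => S (z - z ⊓ K • e)) Filter.atTop (nhds 0)) := by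
  have Tmono : ∀ {a b : E}, a ≤ b → T a ≤ T b := fun {a b} hab => by
    have h := hT (b - a) (sub_nonneg.2 hab)
    rw [map_sub] at h; linarith
  set p : E → ℝ := fun z => ⨆ K : ℕ, T (z ⊓ K • e) with hp
  have hmono_k : ∀ z : E, Monotone fun K : ℕ => T (z ⊓ K • e) := fun z i j hij =>
    Tmono (inf_le_inf_left _ (nsmul_le_nsmul_left he hij))
  have hbdd : ∀ z : E, BddAbove (Set.range fun K : ℕ => T (z ⊓ K • e)) := fun z =>
    ⟨T z, by rintro r ⟨K, rfl⟩; exact Tmono inf_le_left⟩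
  have hle : ∀ z : E, p z ≤ T z := fun z => ciSup_le fun K => Tmono inf_le_left
  have hpos : ∀ z, 0 ≤ z → 0 ≤ p z := by
    intro z hz
    have h0 : T (z ⊓ (0 : ℕ) • e) = 0 := by
      rw [zero_smul, inf_eq_right.2 hz, map_zero]
    calc (0 : ℝ) = T (z ⊓ (0 : ℕ) • e) := h0.symm
      _ ≤ p z := le_ciSup (hbdd z) 0
  have htend : ∀ z : E, Filter.Tendsto (fun K : ℕ => T (z ⊓ K • e)) Filter.atTop (nhds (p z)) :=
    fun z => tendsto_atTop_ciSup (hmono_k z) (hbdd z)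
  have hpmono : ∀ {a b : E}, a ≤ b → p a ≤ p b := fun {a b} hab =>
    ciSup_le fun K => le_trans (Tmono (inf_le_inf_right _ hab)) (le_ciSup (hbdd b) K)
  have hadd : ∀ y z, 0 ≤ y → 0 ≤ z → p (y + z) = p y + p z := by
    intro y z hy hz
    have h1 : p (y + z) ≤ p y + p z := by
      refine le_of_tendsto_of_tendsto' (htend (y + z)) ((htend y).add (htend z)) fun K => ?_
      rw [← map_add]
      exact Tmono (aux_inf_add_le hz (le_inf hy (nsmul_nonneg he K)))
    have h2 : p y + p z ≤ p (y + z) := by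
      refine le_of_tendsto' ((htend y).add (htend z)) fun K => ?_
      rw [← map_add]
      refine le_trans (Tmono ?_) (le_ciSup (hbdd (y + z)) (2 * K))
      refine le_inf (add_le_add inf_le_left inf_le_left) ?_
      rw [two_mul, add_nsmul]
      exact add_le_add inf_le_right inf_le_right
    linarith
  have hbound : ∀ z, 0 ≤ z → |p z| ≤ ‖T‖ * ‖z‖ := by
    intro z hz
    rw [abs_of_nonneg (hpos z hz)]
    refine (hle z).trans ((le_abs_self _).trans ?_)
    rw [← Real.norm_eq_abs]
    exact T.le_opNorm z
  obtain ⟨S, hS⟩ := aux_exists_posCLM p ‖T‖ hadd hbound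
  have hinfK : ∀ (z : E) (K : ℕ), 0 ≤ z → 0 ≤ z ⊓ K • e := fun z K hz =>
    le_inf hz (nsmul_nonneg he K)
  refine ⟨S, fun z hz => (hS z hz).symm ▸ hpos z hz, fun z hz => (hS z hz).symm ▸ hle z,
    ?_, ?_, ?_⟩
  · intro w hw hwe
    rw [hS w hw]
    have hterm : (fun K : ℕ => T (w ⊓ K • e)) = fun _ => (0 : ℝ) := by
      funext K
      rw [aux_inf_nsmul hw he hwe K, map_zero]
    show (⨆ K : ℕ, T (w ⊓ K • e)) = 0
    rw [hterm, ciSup_const]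
  · intro w hw hwe
    rw [hS w hw]
    refine le_antisymm (hle w) ?_
    have h1 : T (w ⊓ (1 : ℕ) • e) = T w := by rw [one_smul, inf_eq_left.2 hwe]
    calc T w = T (w ⊓ (1 : ℕ) • e) := h1.symm
      _ ≤ p w := le_ciSup (hbdd w) 1
  · intro z hz
    have harg : ∀ K : ℕ, 0 ≤ z - z ⊓ K • e := fun K => sub_nonneg.2 inf_le_left
    have hSp : (fun K : ℕ => S (z - z ⊓ K • e)) = fun K : ℕ => p z - p (z ⊓ K • e) := by
      funext K
      rw [hS _ (harg K)]
      have := hadd (z - z ⊓ K • e) (z ⊓ K • e) (harg K) (hinfK z K hz)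
      rw [sub_add_cancel] at this
      linarith
    rw [hSp]
    have hsq : Filter.Tendsto (fun K : ℕ => p (z ⊓ K • e)) Filter.atTop (nhds (p z)) := by
      refine tendsto_of_tendsto_of_tendsto_of_le_of_le (htend z) tendsto_const_nhds
        (fun K => ?_) (fun K => hpmono inf_le_left)
      have hidem : (z ⊓ K • e) ⊓ K • e = z ⊓ K • e := by rw [inf_assoc, inf_idem]
      calc T (z ⊓ K • e) = T ((z ⊓ K • e) ⊓ K • e) := by rw [hidem]
        _ ≤ p (z ⊓ K • e) := le_ciSup (hbdd (z ⊓ K • e)) K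
    have := tendsto_const_nhds (x := p z) (f := Filter.atTop (α := ℕ)) |>.sub hsq
    simpa using this

end AuxCLM
section AuxPairing

variable {E E' : Type*} [NormedAddCommGroup E] [Lattice E] [IsOrderedAddMonoid E] [HasSolidNorm E] [NormedSpace ℝ E]
  [NormedAddCommGroup E'] [Lattice E'] [IsOrderedAddMonoid E'] [HasSolidNorm E'] [NormedSpace ℝ E']

lemma aux_pairing_le_iff (P : DualPairing E E') {f g : E'} :
    f ≤ g ↔ ∀ z : E, 0 ≤ z → P.toDual f z ≤ P.toDual g z := by
  rw [← sub_nonneg, P.pos_iff]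
  refine forall_congr' fun z => imp_congr_right fun hz => ?_
  rw [map_sub, ContinuousLinearMap.sub_apply, sub_nonneg]

lemma aux_pairing_lub (P : DualPairing E E') (S : ℕ → E') (hmono : Monotone S) (u : E') (hu : ∀ k, S k ≤ u) :
    ∃ s, IsLUB (Set.range S) s := by
  set q : E → ℝ := fun z => ⨆ k : ℕ, P.toDual (S k - S 0) z with hq
  have happ : ∀ (f g : E') (z : E), P.toDual (f - g) z = P.toDual f z - P.toDual g z := by
    intro f g z; rw [map_sub, ContinuousLinearMap.sub_apply]
  have hmk : ∀ z : E, 0 ≤ z → Monotone fun k => P.toDual (S k - S 0) z := fun z hz i j hij =>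
    (aux_pairing_le_iff P).1 (sub_le_sub_right (hmono hij) _) z hz
  have hbdd : ∀ z : E, 0 ≤ z → BddAbove (Set.range fun k => P.toDual (S k - S 0) z) := by
    intro z hz
    exact ⟨P.toDual (u - S 0) z, by
      rintro r ⟨k, rfl⟩
      exact (aux_pairing_le_iff P).1 (sub_le_sub_right (hu k) _) z hz⟩
  have ht : ∀ z : E, 0 ≤ z →
      Filter.Tendsto (fun k => P.toDual (S k - S 0) z) Filter.atTop (nhds (q z)) :=
    fun z hz => tendsto_atTop_ciSup (hmk z hz) (hbdd z hz)
  have hadd : ∀ y z, 0 ≤ y → 0 ≤ z → q (y + z) = q y + q z := by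
    intro y z hy hz
    refine tendsto_nhds_unique (ht _ (add_nonneg hy hz)) ?_
    have heq : (fun k => P.toDual (S k - S 0) (y + z))
        = fun k => P.toDual (S k - S 0) y + P.toDual (S k - S 0) z := by
      funext k; rw [map_add]
    rw [heq]
    exact (ht y hy).add (ht z hz)
  have hqpos : ∀ z : E, 0 ≤ z → 0 ≤ q z := by
    intro z hz
    have h0 : P.toDual (S 0 - S 0) z = 0 := by rw [sub_self, map_zero]; rfl
    calc (0 : ℝ) = P.toDual (S 0 - S 0) z := h0.symm
      _ ≤ q z := le_ciSup (hbdd z hz) 0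
  have hCb : ∀ z, 0 ≤ z → |q z| ≤ ‖u - S 0‖ * ‖z‖ := by
    intro z hz
    rw [abs_of_nonneg (hqpos z hz)]
    have h1 : q z ≤ P.toDual (u - S 0) z := ciSup_le fun k =>
      (aux_pairing_le_iff P).1 (sub_le_sub_right (hu k) _) z hz
    refine h1.trans ((le_abs_self _).trans ?_)
    rw [← Real.norm_eq_abs]
    calc ‖P.toDual (u - S 0) z‖ ≤ ‖P.toDual (u - S 0)‖ * ‖z‖ :=
          (P.toDual (u - S 0)).le_opNorm z
      _ = ‖u - S 0‖ * ‖z‖ := by rw [P.toDual.norm_map]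
  obtain ⟨T, hT⟩ := aux_exists_posCLM q ‖u - S 0‖ hadd hCb
  refine ⟨P.toDual.symm T + S 0, ?_, ?_⟩
  · rintro w ⟨k, rfl⟩
    rw [aux_pairing_le_iff P]
    intro z hz
    have hrhs : P.toDual (P.toDual.symm T + S 0) z = T z + P.toDual (S 0) z := by
      rw [map_add, ContinuousLinearMap.add_apply, P.toDual.apply_symm_apply]
    rw [hrhs, hT z hz]
    have hk := le_ciSup (hbdd z hz) k
    rw [happ] at hk
    linarith
  · intro v hv
    rw [aux_pairing_le_iff P]
    intro z hz
    have hlhs : P.toDual (P.toDual.symm T + S 0) z = T z + P.toDual (S 0) z := by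
      rw [map_add, ContinuousLinearMap.add_apply, P.toDual.apply_symm_apply]
    rw [hlhs, hT z hz]
    have hs : q z ≤ P.toDual (v - S 0) z := ciSup_le fun k =>
      (aux_pairing_le_iff P).1 (sub_le_sub_right (hv (Set.mem_range_self k)) _) z hz
    rw [happ] at hs
    linarith

lemma aux_disjoint_unnull (P : DualPairing E E') (hoc : OrderContNorm E') (g : ℕ → E')
    (hd : Pairwise fun n m => |g n| ⊓ |g m| = 0) : UnNullSeq g := by
  intro u hu
  set h : ℕ → E' := fun n => |g n| ⊓ u with hh
  have hpos : ∀ n, 0 ≤ h n := fun n => le_inf (abs_nonneg _) hu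
  have hle : ∀ n, h n ≤ u := fun n => inf_le_right
  have hdp : Pairwise fun n m => h n ⊓ h m = 0 := fun n m hnm =>
    le_antisymm (le_trans (inf_le_inf inf_le_left inf_le_left) (hd hnm).le)
      (le_inf (hpos n) (hpos m))
  set Ssum : ℕ → E' := fun k => ∑ i ∈ Finset.range k, h i with hSsum
  have hmono : Monotone Ssum := monotone_nat_of_le_succ fun k => by
    rw [hSsum]; simp only; rw [Finset.sum_range_succ]
    exact le_add_of_nonneg_right (hpos k)
  have hSu : ∀ k, Ssum k ≤ u := aux_sum_le h u hpos hdp hle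
  obtain ⟨s, hs⟩ := aux_pairing_lub P Ssum hmono u hSu
  set r : ℕ → E' := fun k => s - Ssum k with hr
  have hant : Antitone r := fun i j hij => sub_le_sub_left (hmono hij) _
  have hglb : IsGLB (Set.range r) 0 := by
    constructor
    · rintro w ⟨k, rfl⟩
      exact sub_nonneg.2 (hs.1 (Set.mem_range_self k))
    · intro c hc
      have h1 : ∀ k, Ssum k ≤ s - c := by
        intro k
        have h' : c ≤ s - Ssum k := hc (Set.mem_range_self (f := r) k)
        exact le_sub_comm.1 h'
      have hub : s ≤ s - c := hs.2 (by rintro w ⟨k, rfl⟩; exact h1 k)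
      exact (add_le_iff_nonpos_right s).1 (le_sub_iff_add_le.1 hub)
  have hnorm := hoc ℕ r hant hglb
  have key : ∀ k, ‖h k‖ ≤ ‖r k‖ := by
    intro k
    refine norm_le_norm_of_abs_le_abs ?_
    rw [abs_of_nonneg (hpos k), abs_of_nonneg (sub_nonneg.2 (hs.1 (Set.mem_range_self k)))]
    have hSk : Ssum k + h k = Ssum (k + 1) := (Finset.sum_range_succ h k).symm
    have : Ssum k + h k ≤ s := hSk ▸ hs.1 (Set.mem_range_self (k + 1))
    exact le_sub_iff_add_le'.2 this
  exact squeeze_zero (fun k => norm_nonneg _) key hnorm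

lemma aux_le_biSup (A : Set E) (R : ℝ) (hR : ∀ x ∈ A, ‖x‖ ≤ R)
    (G : E →L[ℝ] ℝ) {y : E} (hy : y ∈ A) :
    |G y| ≤ ⨆ x ∈ A, |G x| := by
  have hbdd : BddAbove (Set.range fun x => ⨆ _ : x ∈ A, |G x|) := by
    refine ⟨max (‖G‖ * R) 0, ?_⟩
    rintro t ⟨x, rfl⟩
    show (⨆ _ : x ∈ A, |G x|) ≤ max (‖G‖ * R) 0
    by_cases hx : x ∈ A
    · rw [ciSup_pos (f := fun _ => |G x|) hx]
      refine le_max_of_le_left ?_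
      calc |G x| = ‖G x‖ := (Real.norm_eq_abs _).symm
        _ ≤ ‖G‖ * ‖x‖ := G.le_opNorm x
        _ ≤ ‖G‖ * R := mul_le_mul_of_nonneg_left (hR x hx) (norm_nonneg _)
    · rw [ciSup_neg (f := fun _ => |G x|) hx, Real.sSup_empty]
      exact le_max_right _ _
  calc |G y| = ⨆ _ : y ∈ A, |G y| := (ciSup_pos (f := fun _ => |G y|) hy).symm
    _ ≤ ⨆ x ∈ A, |G x| := le_ciSup hbdd y

end AuxPairing
/-- If the dual `E'` has order continuous norm, then every weak L-weakly compact subset of `E`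
is L-weakly compact. -/
theorem stmt7 {E : Type*} [NormedAddCommGroup E] [Lattice E] [IsOrderedAddMonoid E] [HasSolidNorm E] [NormedSpace ℝ E] [CompleteSpace E] {E' : Type*} [NormedAddCommGroup E'] [Lattice E'] [IsOrderedAddMonoid E'] [HasSolidNorm E'] [NormedSpace ℝ E'] [CompleteSpace E']
    (P : DualPairing E E') (hoc : OrderContNorm E')
    (A : Set E) (hA : WeakLWCSet P A) : LWCSet A := by
  obtain ⟨hAb, hAseq⟩ := hA
  refine ⟨hAb, ?_⟩
  intro x hxA hxd
  by_contra hnot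
  obtain ⟨R, hR⟩ := isBounded_iff_forall_norm_le.1 hAb
  rw [Metric.tendsto_atTop] at hnot
  push_neg at hnot
  obtain ⟨ε, hε, hfr⟩ := hnot
  have hfr' : ∃ᶠ n in atTop, ε ≤ ‖x n‖ := by
    rw [Filter.frequently_atTop]
    intro N
    obtain ⟨n, hn1, hn2⟩ := hfr N
    refine ⟨n, hn1, ?_⟩
    rwa [Real.dist_eq, sub_zero, abs_of_nonneg (norm_nonneg _)] at hn2
  obtain ⟨k, hkmono, hkx⟩ := Filter.extraction_of_frequently_atTop hfr'
  choose y hyA hyx using fun n => hxA (k n)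
  set e : ℕ → E := fun n => |x (k n)| with he
  have hepos : ∀ n, 0 ≤ e n := fun n => abs_nonneg _
  have hed : Pairwise fun n m => e n ⊓ e m = 0 := fun n m hnm =>
    hxd (hkmono.injective.ne hnm)
  have hxne : ∀ n, x (k n) ≠ 0 := by
    intro n h0
    have := hkx n
    rw [h0, norm_zero] at this
    linarith
  choose F hF1 hF2 using fun n => exists_dual_vector ℝ (x (k n)) (norm_ne_zero_iff.2 (hxne n))
  set f : ℕ → E' := fun n => P.toDual.symm (F n) with hf
  set Φ : ℕ → (E →L[ℝ] ℝ) := fun n => P.toDual |f n| with hΦ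
  have hΦpos : ∀ n z, 0 ≤ z → 0 ≤ Φ n z := fun n z hz => (P.pos_iff _).1 (abs_nonneg _) z hz
  have hΦnorm : ∀ n, ‖Φ n‖ = 1 := by
    intro n
    calc ‖Φ n‖ = ‖|f n|‖ := P.toDual.norm_map _
      _ = ‖f n‖ := norm_abs_eq_norm _
      _ = ‖F n‖ := P.toDual.symm.norm_map _
      _ = 1 := hF1 n
  have hfd : ∀ n (z : E), 0 ≤ z → F n z ≤ Φ n z := by
    intro n z hz
    have h := (aux_pairing_le_iff P).1 (le_abs_self (f n)) z hz
    rwa [P.toDual.apply_symm_apply] at h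
  have hfd' : ∀ n (z : E), 0 ≤ z → -(Φ n z) ≤ F n z := by
    intro n z hz
    have h := (aux_pairing_le_iff P).1 (neg_le.1 (neg_le_abs (f n))) z hz
    rwa [map_neg, ContinuousLinearMap.neg_apply, P.toDual.apply_symm_apply] at h
  have hFΦ : ∀ n, F n (x (k n)) ≤ Φ n (e n) := by
    intro n
    have hdec : x (k n) = (x (k n))⁺ - (x (k n))⁻ := (posPart_sub_negPart _).symm
    have c1 : F n (x (k n)) = F n ((x (k n))⁺) - F n ((x (k n))⁻) := by
      rw [← map_sub, ← hdec]
    have c2 := hfd n ((x (k n))⁺) (posPart_nonneg _)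
    have c3 := hfd' n ((x (k n))⁻) (negPart_nonneg _)
    have c4 : Φ n ((x (k n))⁺) + Φ n ((x (k n))⁻) = Φ n (e n) := by
      rw [← map_add, posPart_add_negPart]
    linarith
  choose φ hφpos hφle hφsupp hφrestr hφloc using fun n =>
    aux_exists_component (Φ n) (hΦpos n) (e n) (hepos n)
  choose ψ hψpos hψle hψsupp hψrestr hψloc using fun n =>
    aux_exists_component (φ n) (hφpos n) ((y n)⁺) (posPart_nonneg _)
  choose χ hχpos hχle hχsupp hχrestr hχloc using fun n =>
    aux_exists_component (φ n) (hφpos n) ((y n)⁻) (negPart_nonneg _)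
  set g : ℕ → E' := fun n => P.toDual.symm (ψ n - χ n) with hg
  have hgapply : ∀ n, P.toDual (g n) = ψ n - χ n := fun n => P.toDual.apply_symm_apply _
  have hψ' : ∀ n, (0 : E') ≤ P.toDual.symm (ψ n) := by
    intro n
    refine (P.pos_iff _).2 ?_
    intro z hz
    rw [P.toDual.apply_symm_apply]
    exact hψpos n z hz
  have hχ' : ∀ n, (0 : E') ≤ P.toDual.symm (χ n) := by
    intro n
    refine (P.pos_iff _).2 ?_
    intro z hz
    rw [P.toDual.apply_symm_apply]
    exact hχpos n z hz
  have hgsub : ∀ n, g n = P.toDual.symm (ψ n) - P.toDual.symm (χ n) := by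
    intro n; rw [hg]; simp only; rw [map_sub]
  have habs : ∀ n, |g n| ≤ P.toDual.symm (ψ n) + P.toDual.symm (χ n) := by
    intro n
    rw [hgsub n]
    exact aux_abs_sub_le (hψ' n) (hχ' n)
  have hcw : ∀ n (w : E), 0 ≤ w → ∀ c : E', c ≤ |g n| → P.toDual c w ≤ 2 * φ n w := by
    intro n w hw c hc
    have h1 := (aux_pairing_le_iff P).1 (hc.trans (habs n)) w hw
    rw [map_add, ContinuousLinearMap.add_apply, P.toDual.apply_symm_apply,
      P.toDual.apply_symm_apply] at h1
    have h2 := hψle n w hw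
    have h3 := hχle n w hw
    linarith
  have hgd : Pairwise fun n m => |g n| ⊓ |g m| = 0 := by
    intro n m hnm
    have hc0 : (0 : E') ≤ |g n| ⊓ |g m| := le_inf (abs_nonneg _) (abs_nonneg _)
    have hz : ∀ z : E, 0 ≤ z → P.toDual (|g n| ⊓ |g m|) z ≤ 0 := by
      intro z hz
      have hK : ∀ K : ℕ, P.toDual (|g n| ⊓ |g m|) z ≤ 2 * φ m (z - z ⊓ K • e m) := by
        intro K
        have hw1 : 0 ≤ z ⊓ K • e m := le_inf hz (nsmul_nonneg (hepos m) K)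
        have hw2 : 0 ≤ z - z ⊓ K • e m := sub_nonneg.2 inf_le_left
        have hsplit : P.toDual (|g n| ⊓ |g m|) z
            = P.toDual (|g n| ⊓ |g m|) (z ⊓ K • e m)
              + P.toDual (|g n| ⊓ |g m|) (z - z ⊓ K • e m) := by
          rw [← map_add, add_sub_cancel]
        have hKe : (z ⊓ K • e m) ⊓ e n = 0 := by
          have hnm' : e n ⊓ e m = 0 := hed hnm
          have h0 : e n ⊓ K • e m = 0 := aux_inf_nsmul (hepos n) (hepos m) hnm' K
          refine le_antisymm ?_ (le_inf hw1 (hepos n))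
          calc (z ⊓ K • e m) ⊓ e n ≤ (K • e m) ⊓ e n := inf_le_inf_right _ inf_le_right
            _ = 0 := by rw [inf_comm]; exact h0
        have ht1 : P.toDual (|g n| ⊓ |g m|) (z ⊓ K • e m) ≤ 0 := by
          refine (hcw n _ hw1 _ inf_le_left).trans ?_
          rw [hφsupp n _ hw1 hKe]
          norm_num
        have ht2 : P.toDual (|g n| ⊓ |g m|) (z - z ⊓ K • e m)
            ≤ 2 * φ m (z - z ⊓ K • e m) := hcw m _ hw2 _ inf_le_right
        linarith
      have hlim : Tendsto (fun K : ℕ => 2 * φ m (z - z ⊓ K • e m)) atTop (𝓝 0) := by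
        have := (hφloc m z hz).const_mul (2 : ℝ)
        simpa using this
      exact ge_of_tendsto' hlim hK
    have hcle : |g n| ⊓ |g m| ≤ 0 := by
      rw [aux_pairing_le_iff P]
      intro z hz'
      rw [map_zero]
      exact hz z hz'
    exact le_antisymm hcle hc0
  have hgun : UnNullSeq g := aux_disjoint_unnull P hoc g hgd
  have hΦabs : ∀ n (S : E →L[ℝ] ℝ), (∀ z, 0 ≤ z → 0 ≤ S z) → (∀ z, 0 ≤ z → S z ≤ Φ n z) →
      ∀ z : E, |S z| ≤ Φ n |z| := by
    intro n S hSpos hSle z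
    have hdec : S z = S z⁺ - S z⁻ := by rw [← map_sub, posPart_sub_negPart]
    have h1 := hSpos z⁺ (posPart_nonneg _)
    have h2 := hSpos z⁻ (negPart_nonneg _)
    have h3 := hSle z⁺ (posPart_nonneg _)
    have h4 := hSle z⁻ (negPart_nonneg _)
    have h5 : Φ n z⁺ + Φ n z⁻ = Φ n |z| := by rw [← map_add, posPart_add_negPart]
    rw [hdec, abs_sub_le_iff]
    constructor <;> linarith
  have hgbd : NormBddSeq g := by
    refine ⟨2, fun n => ?_⟩
    have hnm : ‖g n‖ = ‖ψ n - χ n‖ := P.toDual.symm.norm_map _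
    rw [hnm]
    refine ContinuousLinearMap.opNorm_le_bound _ (by norm_num) fun z => ?_
    have b1 := hΦabs n (ψ n) (hψpos n) (fun w hw => (hψle n w hw).trans (hφle n w hw)) z
    have b2 := hΦabs n (χ n) (hχpos n) (fun w hw => (hχle n w hw).trans (hφle n w hw)) z
    have b3 : Φ n |z| ≤ ‖z‖ := by
      have h7 := (Φ n).le_opNorm |z|
      rw [hΦnorm n, one_mul, norm_abs_eq_norm] at h7
      exact (Real.le_norm_self _).trans h7
    rw [ContinuousLinearMap.sub_apply, Real.norm_eq_abs]
    calc |ψ n z - χ n z| ≤ |ψ n z| + |χ n z| := abs_sub _ _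
      _ ≤ 2 * ‖z‖ := by linarith
  have hconc := hAseq g hgbd hgun
  have hlow : ∀ n, ε ≤ ⨆ x ∈ A, |P.toDual (g n) x| := by
    intro n
    have hy1 : ψ n (y n) = φ n ((y n)⁺) := by
      have hdec : ψ n (y n) = ψ n ((y n)⁺) - ψ n ((y n)⁻) := by
        rw [← map_sub, posPart_sub_negPart]
      rw [hdec, hψrestr n _ (posPart_nonneg _) le_rfl,
        hψsupp n _ (negPart_nonneg _) (by rw [inf_comm]; exact posPart_inf_negPart_eq_zero _),
        sub_zero]
    have hy2 : χ n (y n) = -(φ n ((y n)⁻)) := by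
      have hdec : χ n (y n) = χ n ((y n)⁺) - χ n ((y n)⁻) := by
        rw [← map_sub, posPart_sub_negPart]
      rw [hdec, hχrestr n _ (negPart_nonneg _) le_rfl,
        hχsupp n _ (posPart_nonneg _) (posPart_inf_negPart_eq_zero _), zero_sub]
    have hval : P.toDual (g n) (y n) = φ n ((y n)⁺) + φ n ((y n)⁻) := by
      rw [hgapply n, ContinuousLinearMap.sub_apply, hy1, hy2]
      ring
    have hεv : ε ≤ P.toDual (g n) (y n) := by
      have c1 : ε ≤ ‖x (k n)‖ := hkx n
      have c2 : F n (x (k n)) = ‖x (k n)‖ := hF2 n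
      have c3 : F n (x (k n)) ≤ Φ n (e n) := hFΦ n
      have c4 : φ n (e n) = Φ n (e n) := hφrestr n (e n) (hepos n) le_rfl
      have c5 : φ n (e n) ≤ φ n |y n| := by
        have h6 := hφpos n (|y n| - e n) (sub_nonneg.2 (hyx n))
        rw [map_sub] at h6
        linarith
      have c6 : φ n |y n| = φ n ((y n)⁺) + φ n ((y n)⁻) := by
        rw [← map_add, posPart_add_negPart]
      rw [hval]
      linarith
    calc ε ≤ P.toDual (g n) (y n) := hεv
      _ ≤ |P.toDual (g n) (y n)| := le_abs_self _
      _ ≤ ⨆ x ∈ A, |P.toDual (g n) x| := aux_le_biSup A R hR _ (hyA n)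
  have hev := hconc.eventually_lt_const hε
  rw [Filter.eventually_atTop] at hev
  obtain ⟨N, hN⟩ := hev
  exact absurd (hlow N) (not_le.2 (hN N le_rfl))
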